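/- Let Q be a finite type with a colouring c : Q → Bool, g(s) = N_w(s) − N_b(s) for finsets s ⊆ Q, α ⊆ Q a finset, and G a finite set of finsets of Q containing ∅ and closed under symmetric difference. Define v : (Q → ZMod 2) → ℂ by v = Σ_{B ∈ G} I^{g(α∩B)} · δ_{χ_B}. If β ∈ G satisfies I^{g(α∩β)} = −1 and |α∩β∩B| is even for every B ∈ G, then the translation operator sending each δ_x to δ_{x+χ_β} sends v to −v. (In the 3D colour code with two linked error membranes, the product of all boundary stabiliser generators of one colour has the state as a −1 eigenstate, giving an odd parity of −1 outcomes: the linking charge.) -/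

import Mathlib

/-- Number of white elements of a finset. -/
def Nw {Q : Type*} (c : Q → Bool) (s : Finset Q) : ℕ :=
  (s.filter (fun q => c q = true)).card

/-- Number of black elements of a finset. -/
def Nb {Q : Type*} (c : Q → Bool) (s : Finset Q) : ℕ :=
  (s.filter (fun q => c q = false)).card

/-- g(s) = N_w(s) − N_b(s). -/
def gdiff {Q : Type*} (c : Q → Bool) (s : Finset Q) : ℤ :=
  (Nw c s : ℤ) - (Nb c s : ℤ)

/-- Indicator bit string of a finset. -/
def chi {Q : Type*} [DecidableEq Q] (s : Finset Q) : Q → ZMod 2 :=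
  fun q => if q ∈ s then 1 else 0

/-- The state A_α|0̄⟩ obtained by applying the S/S† error pattern on α to the
colour-code codestate with X stabiliser group G:
v = Σ_{B ∈ G} I^{g(α∩B)} δ_{χ_B}. -/
noncomputable def sState {Q : Type*} [DecidableEq Q] [Fintype Q] (c : Q → Bool)
    (α : Finset Q) (G : Finset (Finset Q)) : (Q → ZMod 2) → ℂ :=
  fun x => ∑ B ∈ G,
    Complex.I ^ (gdiff c (α ∩ B)) * (if x = chi B then 1 else 0)

lemma card_symmDiff' {Q : Type*} [DecidableEq Q] (A B : Finset Q) :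
    ((symmDiff A B).card : ℤ) = A.card + B.card - 2 * (A ∩ B).card := by
  have h1 := Finset.card_union_add_card_inter A B
  have h2 : (symmDiff A B).card = (A ∪ B).card - (A ∩ B).card := by
    rw [symmDiff_eq_sup_sdiff_inf, Finset.sup_eq_union, Finset.inf_eq_inter,
      Finset.card_sdiff_of_subset Finset.inter_subset_union]
  have h3 : (A ∩ B).card ≤ (A ∪ B).card := Finset.card_le_card Finset.inter_subset_union
  omega

lemma filter_symmDiff' {Q : Type*} [DecidableEq Q] (p : Q → Prop) [DecidablePred p]
    (A B : Finset Q) :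
    (symmDiff A B).filter p = symmDiff (A.filter p) (B.filter p) := by
  ext q; simp [Finset.mem_symmDiff, Finset.mem_filter]; tauto

lemma filter_inter' {Q : Type*} [DecidableEq Q] (p : Q → Prop) [DecidablePred p]
    (A B : Finset Q) :
    (A ∩ B).filter p = A.filter p ∩ B.filter p := by
  ext q; simp [Finset.mem_filter]; tauto

lemma gdiff_symmDiff {Q : Type*} [DecidableEq Q] (c : Q → Bool) (A B : Finset Q) :
    gdiff c (symmDiff A B) = gdiff c A + gdiff c B - 2 * gdiff c (A ∩ B) := by
  unfold gdiff Nw Nb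
  have h1 := card_symmDiff' (A.filter (fun q => c q = true)) (B.filter (fun q => c q = true))
  have h2 := card_symmDiff' (A.filter (fun q => c q = false)) (B.filter (fun q => c q = false))
  rw [filter_symmDiff', filter_symmDiff', filter_inter', filter_inter']
  omega

lemma even_gdiff {Q : Type*} [DecidableEq Q] (c : Q → Bool) (s : Finset Q)
    (h : Even s.card) : Even (gdiff c s) := by
  have hc := Finset.card_filter_add_card_filter_not (s := s) (p := fun q => c q = true)
  have hn : s.filter (fun q => ¬(c q = true)) = s.filter (fun q => c q = false) := by
    simp [Bool.not_eq_true]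
  rw [hn] at hc
  unfold gdiff Nw Nb
  rcases h with ⟨k, hk⟩
  have hev : Even ((Nw c s : ℤ) + (Nb c s : ℤ)) := by
    unfold Nw Nb; exact ⟨k, by omega⟩
  rw [Int.even_sub]
  rw [Int.even_add] at hev
  unfold Nw Nb at hev
  exact hev

lemma I_zpow_combine (a b d : ℤ) (hd : Even d) :
    Complex.I ^ (a + b - 2 * d) = Complex.I ^ a * Complex.I ^ b := by
  obtain ⟨m, hm⟩ := hd
  have hne := Complex.I_ne_zero
  have h1 : Complex.I ^ (-(2 * d)) = 1 := by
    have h : -(2 * d) = 4 * (-m) := by omega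
    rw [h, zpow_mul]
    rw [show ((4:ℤ)) = ((4:ℕ) : ℤ) from rfl, zpow_natCast]
    rw [show (4:ℕ) = 2*2 from rfl, pow_mul, Complex.I_sq]
    norm_num
  rw [show a + b - 2 * d = a + (b + -(2 * d)) by ring, zpow_add₀ hne, zpow_add₀ hne, h1, mul_one]

lemma chi_symmDiff {Q : Type*} [DecidableEq Q] (A B : Finset Q) :
    chi (symmDiff A B) = chi A + chi B := by
  funext q
  simp only [chi, Finset.mem_symmDiff, Pi.add_apply]
  by_cases hA : q ∈ A <;> by_cases hB : q ∈ B <;> simp [hA, hB] <;> decide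

lemma chi_add_self {Q : Type*} [DecidableEq Q] (B : Finset Q) :
    chi B + chi B = 0 := by
  funext q
  simp only [chi, Pi.add_apply, Pi.zero_apply]
  by_cases hB : q ∈ B <;> simp [hB] <;> decide

theorem stmt_8 {Q : Type*} [DecidableEq Q] [Fintype Q] (c : Q → Bool)
    (α : Finset Q) (G : Finset (Finset Q))
    (h_empty : ∅ ∈ G) (h_closed : ∀ A ∈ G, ∀ B ∈ G, symmDiff A B ∈ G)
    (β : Finset Q) (hβ : β ∈ G)
    (hphase : Complex.I ^ (gdiff c (α ∩ β)) = -1)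
    (heven : ∀ B ∈ G, Even ((α ∩ β ∩ B).card)) :
    (fun x : Q → ZMod 2 => sState c α G (x + chi β)) = -sState c α G := by
  funext x
  show sState c α G (x + chi β) = -sState c α G x
  unfold sState
  rw [show -∑ B ∈ G, Complex.I ^ (gdiff c (α ∩ B)) * (if x = chi B then 1 else 0)
      = ∑ B ∈ G, -(Complex.I ^ (gdiff c (α ∩ B)) * (if x = chi B then 1 else 0)) from
    (Finset.sum_neg_distrib _).symm]
  refine Finset.sum_nbij' (fun B => symmDiff B β) (fun B => symmDiff B β)
    (fun B hB => h_closed B hB β hβ) (fun B hB => h_closed B hB β hβ)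
    (fun B _ => by simp [symmDiff_assoc, symmDiff_self, symmDiff_bot])
    (fun B _ => by simp [symmDiff_assoc, symmDiff_self, symmDiff_bot])
    (fun B hB => ?_)
  -- goal: I^{g(α∩B)} [x + chiβ = chi B] = -(I^{g(α∩(BΔβ))} [x = chi (BΔβ)])
  have hinter : α ∩ symmDiff B β = symmDiff (α ∩ B) (α ∩ β) := by
    ext q; simp [Finset.mem_symmDiff, Finset.mem_inter]; tauto
  have hset : (α ∩ B) ∩ (α ∩ β) = α ∩ β ∩ B := by
    ext q; simp [Finset.mem_inter]; tauto
  have hcard : Even (((α ∩ B) ∩ (α ∩ β)).card) := by rw [hset]; exact heven B hB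
  have hphase' : Complex.I ^ (gdiff c (α ∩ symmDiff B β))
      = -(Complex.I ^ (gdiff c (α ∩ B))) := by
    rw [hinter, gdiff_symmDiff, I_zpow_combine _ _ _ (even_gdiff c _ hcard), hphase]
    ring
  have hind : (x + chi β = chi B) ↔ (x = chi (symmDiff B β)) := by
    rw [chi_symmDiff]
    constructor
    · intro h
      have := congrArg (· + chi β) h
      simpa [add_assoc, chi_add_self] using this
    · intro h
      rw [h, add_assoc, chi_add_self, add_zero]
  have hphase'' : Complex.I ^ (gdiff c (α ∩ B)) = -(Complex.I ^ (gdiff c (α ∩ symmDiff B β))) := by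
    rw [hphase']; ring
  rw [hphase'']
  by_cases hx : x + chi β = chi B
  · rw [if_pos hx, if_pos (hind.mp hx)]; ring
  · rw [if_neg hx, if_neg (fun h => hx (hind.mpr h))]; ring
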